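/- (Theorem 3.5, exactness of the ℓ1 penalty) There exists β̄ > 0 such that for every β ≥ β̄ the optimal solution sets coincide: S_β^opt = S^opt; i.e., z minimizes f_β over Ω if and only if z minimizes f over the complementarity-feasible set F. -/

import Mathlib

noncomputable section

/-- Dot product on `ℝ^m`. -/
def dotp {m : ℕ} (x y : Fin m → ℝ) : ℝ := ∑ k, x k * y k

/-- The ℓ₁ penalty term `p(z) = Σ_{i<j} ⟨x_i, x_j⟩`. -/
def pen {n m : ℕ} (z : Fin n → Fin m → ℝ) : ℝ :=
  ∑ i : Fin n, ∑ j : Fin n, if i < j then dotp (z i) (z j) else 0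

/-- `f` is multi-affine: affine in each block when the others are fixed. -/
def MultiAffine {n m : ℕ} (f : (Fin n → Fin m → ℝ) → ℝ) : Prop :=
  ∀ (i : Fin n) (z : Fin n → Fin m → ℝ) (x y : Fin m → ℝ) (t : ℝ),
    f (Function.update z i (t • x + (1 - t) • y)) =
      t * f (Function.update z i x) + (1 - t) * f (Function.update z i y)

/-- Membership in `Ω = Ω₁⁺ × ⋯ × Ωₙ⁺`. -/
def InOmega {n m : ℕ} (Om : Fin n → Set (Fin m → ℝ)) (z : Fin n → Fin m → ℝ) : Prop :=
  ∀ i, z i ∈ Om i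

/-- Feasibility for (P): `z ∈ Ω` and `⟨x_i, x_j⟩ = 0` for all `i ≠ j`. -/
def Feas {n m : ℕ} (Om : Fin n → Set (Fin m → ℝ)) (z : Fin n → Fin m → ℝ) : Prop :=
  InOmega Om z ∧ ∀ i j, i ≠ j → dotp (z i) (z j) = 0

/-- `S^opt`: global minimizers of `f` over the feasible region of (P). -/
def SOpt {n m : ℕ} (Om : Fin n → Set (Fin m → ℝ)) (f : (Fin n → Fin m → ℝ) → ℝ) :
    Set (Fin n → Fin m → ℝ) :=
  {z | Feas Om z ∧ ∀ w, Feas Om w → f z ≤ f w}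

/-- `S_β^opt`: global minimizers of `f_β = f + β p` over `Ω`. -/
def SBeta {n m : ℕ} (Om : Fin n → Set (Fin m → ℝ)) (f : (Fin n → Fin m → ℝ) → ℝ) (β : ℝ) :
    Set (Fin n → Fin m → ℝ) :=
  {z | InOmega Om z ∧ ∀ w, InOmega Om w → f z + β * pen z ≤ f w + β * pen w}

-- dotp basics
lemma dotp_comm {m : ℕ} (x y : Fin m → ℝ) : dotp x y = dotp y x := by
  unfold dotp; exact Finset.sum_congr rfl fun k _ => mul_comm _ _

lemma dotp_affine_left {m : ℕ} (x y w : Fin m → ℝ) (t : ℝ) :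
    dotp (t • x + (1 - t) • y) w = t * dotp x w + (1 - t) * dotp y w := by
  unfold dotp
  rw [Finset.mul_sum, Finset.mul_sum, ← Finset.sum_add_distrib]
  exact Finset.sum_congr rfl fun k _ => by
    simp [Pi.add_apply, Pi.smul_apply, smul_eq_mul]; ring

lemma dotp_nonneg {m : ℕ} {x y : Fin m → ℝ} (hx : ∀ k, 0 ≤ x k) (hy : ∀ k, 0 ≤ y k) :
    0 ≤ dotp x y :=
  Finset.sum_nonneg fun k _ => mul_nonneg (hx k) (hy k)

-- pen is multiaffine
lemma pen_multiAffine {n m : ℕ} : MultiAffine (pen (n := n) (m := m)) := by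
  intro i z x y t
  unfold pen
  rw [Finset.mul_sum, Finset.mul_sum, ← Finset.sum_add_distrib]
  refine Finset.sum_congr rfl fun a _ => ?_
  rw [Finset.mul_sum, Finset.mul_sum, ← Finset.sum_add_distrib]
  refine Finset.sum_congr rfl fun b _ => ?_
  by_cases hab : a < b
  · simp only [if_pos hab]
    have hne : a ≠ b := ne_of_lt hab
    by_cases ha : a = i
    · subst ha
      have hb : b ≠ a := hne.symm
      rw [Function.update_self, Function.update_self, Function.update_self,
        Function.update_of_ne hb, Function.update_of_ne hb, Function.update_of_ne hb,
        dotp_affine_left]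
    · rw [Function.update_of_ne ha, Function.update_of_ne ha, Function.update_of_ne ha]
      by_cases hb : b = i
      · subst hb
        rw [Function.update_self, Function.update_self, Function.update_self,
          dotp_comm (z a), dotp_affine_left, dotp_comm x, dotp_comm y]
      · rw [Function.update_of_ne hb, Function.update_of_ne hb, Function.update_of_ne hb]
        ring
  · simp only [if_neg hab]; ring

lemma multiAffine_add_smul {n m : ℕ} {f g : (Fin n → Fin m → ℝ) → ℝ} (β : ℝ)
    (hf : MultiAffine f) (hg : MultiAffine g) :
    MultiAffine (fun z => f z + β * g z) := by
  intro i z x y t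
  simp only []
  rw [hf i z x y t, hg i z x y t]; ring

-- pen of feasible point is zero
lemma pen_eq_zero_of_feas {n m : ℕ} {z : Fin n → Fin m → ℝ}
    (h : ∀ i j, i ≠ j → dotp (z i) (z j) = 0) : pen z = 0 := by
  unfold pen
  refine Finset.sum_eq_zero fun i _ => Finset.sum_eq_zero fun j _ => ?_
  by_cases hij : i < j
  · rw [if_pos hij, h i j (ne_of_lt hij)]
  · rw [if_neg hij]

lemma pen_nonneg {n m : ℕ} {z : Fin n → Fin m → ℝ} (h : ∀ i k, 0 ≤ z i k) : 0 ≤ pen z := by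
  unfold pen
  refine Finset.sum_nonneg fun i _ => Finset.sum_nonneg fun j _ => ?_
  by_cases hij : i < j
  · rw [if_pos hij]; exact dotp_nonneg (h i) (h j)
  · rw [if_neg hij]

lemma feas_of_pen_eq_zero {n m : ℕ} {z : Fin n → Fin m → ℝ} (h : ∀ i k, 0 ≤ z i k)
    (hz : pen z = 0) : ∀ i j, i ≠ j → dotp (z i) (z j) = 0 := by
  have key : ∀ i j, i < j → dotp (z i) (z j) = 0 := by
    intro i j hij
    have h1 : ∀ a ∈ Finset.univ (α := Fin n),
        0 ≤ ∑ b : Fin n, if a < b then dotp (z a) (z b) else 0 := fun a _ =>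
      Finset.sum_nonneg fun b _ => by
        by_cases hb : a < b
        · rw [if_pos hb]; exact dotp_nonneg (h a) (h b)
        · rw [if_neg hb]
    have h2 := (Finset.sum_eq_zero_iff_of_nonneg h1).1 hz i (Finset.mem_univ i)
    have h3 : ∀ b ∈ Finset.univ (α := Fin n),
        0 ≤ if i < b then dotp (z i) (z b) else 0 := fun b _ => by
      by_cases hb : i < b
      · rw [if_pos hb]; exact dotp_nonneg (h i) (h b)
      · rw [if_neg hb]
    have h4 := (Finset.sum_eq_zero_iff_of_nonneg h3).1 h2 j (Finset.mem_univ j)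
    rwa [if_pos hij] at h4
  intro i j hij
  rcases lt_or_gt_of_ne hij with hlt | hgt
  · exact key i j hlt
  · rw [dotp_comm]; exact key j i hgt

lemma omega_eq_hull {m : ℕ} (S : Set (Fin m → ℝ)) (hcpt : IsCompact S) (hcvx : Convex ℝ S)
    (hfin : (Set.extremePoints ℝ S).Finite) :
    S = convexHull ℝ (Set.extremePoints ℝ S) := by
  have h1 := closure_convexHull_extremePoints hcpt hcvx
  rw [(hfin.isCompact_convexHull ℝ).isClosed.closure_eq] at h1
  exact h1.symm

lemma block_concave {n m : ℕ} {g : (Fin n → Fin m → ℝ) → ℝ} (hg : MultiAffine g)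
    (i : Fin n) (v : Fin n → Fin m → ℝ) :
    ConcaveOn ℝ Set.univ (fun x => g (Function.update v i x)) := by
  refine ⟨convex_univ, fun x _ y _ a b ha hb hab => ?_⟩
  have hb' : b = 1 - a := by linarith
  subst hb'
  simp only [smul_eq_mul]
  rw [hg i v x y a]

lemma vertex_reduce {n m : ℕ} (Om : Fin n → Set (Fin m → ℝ))
    (hcpt : ∀ i, IsCompact (Om i)) (hcvx : ∀ i, Convex ℝ (Om i))
    (hfin : ∀ i, (Set.extremePoints ℝ (Om i)).Finite)
    {g : (Fin n → Fin m → ℝ) → ℝ} (hg : MultiAffine g)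
    (z : Fin n → Fin m → ℝ) (hz : InOmega Om z) :
    ∃ v, InOmega Om v ∧ (∀ i, v i ∈ Set.extremePoints ℝ (Om i)) ∧ g v ≤ g z := by
  have main : ∀ s : Finset (Fin n), ∃ v, InOmega Om v ∧
      (∀ i ∈ s, v i ∈ Set.extremePoints ℝ (Om i)) ∧ g v ≤ g z := by
    intro s
    induction s using Finset.induction_on with
    | empty => exact ⟨z, hz, fun i hi => absurd hi (Finset.notMem_empty i), le_refl _⟩
    | @insert i s hi ih =>
      obtain ⟨v, hvΩ, hvext, hvle⟩ := ih
      have hmem : v i ∈ convexHull ℝ (Set.extremePoints ℝ (Om i)) := by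
        rw [← omega_eq_hull (Om i) (hcpt i) (hcvx i) (hfin i)]; exact hvΩ i
      have hconc : ConcaveOn ℝ Set.univ (fun x => g (Function.update v i x)) :=
        block_concave hg i v
      obtain ⟨w, hwext, hwle⟩ :=
        hconc.exists_le_of_mem_convexHull (Set.subset_univ _) hmem
      refine ⟨Function.update v i w, ?_, ?_, ?_⟩
      · intro j
        rcases eq_or_ne j i with rfl | hji
        · rw [Function.update_self]; exact extremePoints_subset hwext
        · rw [Function.update_of_ne hji]; exact hvΩ j
      · intro j hj
        rcases eq_or_ne j i with rfl | hji
        · rw [Function.update_self]; exact hwext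
        · rw [Function.update_of_ne hji]
          exact hvext j ((Finset.mem_insert.1 hj).resolve_left hji)
      · calc g (Function.update v i w) ≤ g (Function.update v i (v i)) := hwle
          _ = g v := by rw [Function.update_eq_self]
          _ ≤ g z := hvle
  obtain ⟨v, h1, h2, h3⟩ := main Finset.univ
  exact ⟨v, h1, fun i => h2 i (Finset.mem_univ i), h3⟩

lemma dotp_cont {n m : ℕ} (i j : Fin n) :
    Continuous (fun z : Fin n → Fin m → ℝ => dotp (z i) (z j)) := by
  unfold dotp
  exact continuous_finset_sum _ fun k _ =>
    (by fun_prop)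

lemma feas_compact {n m : ℕ} (Om : Fin n → Set (Fin m → ℝ))
    (hcpt : ∀ i, IsCompact (Om i)) : IsCompact {z | Feas Om z} := by
  have hEq : {z : Fin n → Fin m → ℝ | Feas Om z} =
      (Set.univ.pi Om) ∩ (⋂ i, ⋂ j, ⋂ (_ : i ≠ j),
        {z : Fin n → Fin m → ℝ | dotp (z i) (z j) = 0}) := by
    ext z
    simp [Feas, InOmega, Set.mem_pi, Set.mem_iInter]
  rw [hEq]
  refine (isCompact_univ_pi hcpt).inter_right ?_
  exact isClosed_iInter fun i => isClosed_iInter fun j => isClosed_iInter fun _ =>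
    isClosed_eq (dotp_cont i j) continuous_const


/-- **Theorem 3.5** (exactness of the ℓ₁ penalty). There exists `β̄ > 0` such that
`S_β^opt = S^opt` for every `β ≥ β̄`. -/
theorem exact_penalty (n m : ℕ) (hn : 2 ≤ n) (hm : 1 ≤ m)
    (Om : Fin n → Set (Fin m → ℝ))
    (hne : ∀ i, (Om i).Nonempty) (hcpt : ∀ i, IsCompact (Om i))
    (hcvx : ∀ i, Convex ℝ (Om i))
    (hnonneg : ∀ i, ∀ x ∈ Om i, ∀ k, 0 ≤ x k)
    (hfin : ∀ i, (Set.extremePoints ℝ (Om i)).Finite)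
    (f : (Fin n → Fin m → ℝ) → ℝ) (hf : MultiAffine f) (hfc : Continuous f)
    (hFne : ∃ z, Feas Om z) :
    ∃ βbar : ℝ, 0 < βbar ∧ ∀ β ≥ βbar, SBeta Om f β = SOpt Om f := by
  -- minimizer of f over F
  obtain ⟨zs, hzsF, hzsmin'⟩ :=
    (feas_compact Om hcpt).exists_isMinOn hFne hfc.continuousOn
  have hzsmin : ∀ w, Feas Om w → f zs ≤ f w := fun w hw => hzsmin' hw
  set fstar := f zs with hfstar
  have hpen_zs : pen zs = 0 := pen_eq_zero_of_feas hzsF.2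
  -- the finite vertex set
  have hVfin : (Set.univ.pi fun i => Set.extremePoints ℝ (Om i)).Finite :=
    Set.Finite.pi fun i => hfin i
  set VF := hVfin.toFinset with hVF
  have hVFne : VF.Nonempty := by
    choose v0 hv0 using fun i => (hcpt i).extremePoints_nonempty (hne i)
    exact ⟨v0, hVfin.mem_toFinset.2 (fun i _ => hv0 i)⟩
  set q : (Fin n → Fin m → ℝ) → ℝ :=
    fun v => if 0 < pen v then max 0 ((fstar - f v) / pen v) else 0 with hq
  set β₀ := 1 + VF.sup' hVFne q with hβ₀
  have hqnn : ∀ v, 0 ≤ q v := by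
    intro v; rw [hq]; dsimp only
    split
    · exact le_max_left _ _
    · exact le_refl 0
  have hsupnn : 0 ≤ VF.sup' hVFne q :=
    le_trans (hqnn hVFne.choose) (Finset.le_sup' q hVFne.choose_spec)
  have hβ₀pos : 0 < β₀ := by rw [hβ₀]; linarith
  -- key claim
  have key : ∀ β ≥ β₀, ∀ z, InOmega Om z → fstar ≤ f z + β * pen z := by
    intro β hβ z hzΩ
    obtain ⟨v, hvΩ, hvext, hvle⟩ := vertex_reduce Om hcpt hcvx hfin
      (multiAffine_add_smul β hf pen_multiAffine) z hzΩ
    have hvnn : ∀ i k, 0 ≤ v i k := fun i k => hnonneg i (v i) (hvΩ i) k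
    have hpv : 0 ≤ pen v := pen_nonneg hvnn
    rcases hpv.eq_or_lt with hpv0 | hpv0
    · -- pen v = 0 : v is feasible
      have hvF : Feas Om v := ⟨hvΩ, feas_of_pen_eq_zero hvnn hpv0.symm⟩
      have := hzsmin v hvF
      calc fstar ≤ f v := this
        _ = f v + β * pen v := by rw [← hpv0]; ring
        _ ≤ f z + β * pen z := hvle
    · -- pen v > 0
      have hvVF : v ∈ VF := hVfin.mem_toFinset.2 (fun i _ => hvext i)
      have h1 : q v ≤ VF.sup' hVFne q := Finset.le_sup' q hvVF
      have h2 : (fstar - f v) / pen v ≤ q v := by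
        rw [hq]; dsimp only; rw [if_pos hpv0]; exact le_max_right _ _
      have h3 : (fstar - f v) / pen v ≤ β := by
        have : VF.sup' hVFne q ≤ β := by rw [hβ₀] at hβ; linarith
        linarith
      have h4 : fstar - f v ≤ β * pen v := by
        have := mul_le_mul_of_nonneg_right h3 (le_of_lt hpv0)
        rwa [div_mul_cancel₀ _ (ne_of_gt hpv0)] at this
      calc fstar ≤ f v + β * pen v := by linarith
        _ ≤ f z + β * pen z := hvle
  refine ⟨β₀ + 1, by linarith, fun β hβ => ?_⟩
  have hββ₀ : β₀ ≤ β := by linarith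
  ext z
  constructor
  · rintro ⟨hzΩ, hzmin⟩
    have hznn : ∀ i k, 0 ≤ z i k := fun i k => hnonneg i (z i) (hzΩ i) k
    have hpz_nn : 0 ≤ pen z := pen_nonneg hznn
    have hup : f z + β * pen z ≤ fstar := by
      have := hzmin zs hzsF.1
      rwa [hpen_zs, mul_zero, add_zero] at this
    have hlow : fstar ≤ f z + β * pen z := key β hββ₀ z hzΩ
    have hlow0 : fstar ≤ f z + β₀ * pen z := key β₀ le_rfl z hzΩ
    have hpz : pen z = 0 := by nlinarith
    have hfz : f z ≤ fstar := by rw [hpz] at hup; linarith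
    refine ⟨⟨hzΩ, feas_of_pen_eq_zero hznn hpz⟩, fun w hw => le_trans hfz (hzsmin w hw)⟩
  · rintro ⟨hzF, hzmin⟩
    have hpz : pen z = 0 := pen_eq_zero_of_feas hzF.2
    refine ⟨hzF.1, fun w hwΩ => ?_⟩
    have h1 : f z ≤ fstar := hzmin zs hzsF
    have h2 : fstar ≤ f w + β * pen w := key β hββ₀ w hwΩ
    rw [hpz, mul_zero, add_zero]
    linarith
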